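/- arXiv:2112.14943 — 6 statements merged into one kernel-verified Lean document; each statement's English description precedes it below -/
import Mathlib

section
/- The maximum of b²c/2 + bcd + c²d/2 over nonnegative reals b, c, d with b+c+d = 1 equals 2/25, attained at b = c = 2/5, d = 1/5. -/
theorem stmt_1 :
    (∀ b c d : ℝ, 0 ≤ b → 0 ≤ c → 0 ≤ d → b + c + d = 1 →
      b^2*c/2 + b*c*d + c^2*d/2 ≤ 2/25) ∧
    (2/5 : ℝ)^2*(2/5)/2 + (2/5)*(2/5)*(1/5) + (2/5)^2*(1/5)/2 = 2/25 := by
  constructor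
  · intro b c d hb hc hd hs
    rcases le_or_gt c (4/5) with h | h
    · nlinarith [mul_nonneg (sq_nonneg (c - 2/5)) (by linarith : (0:ℝ) ≤ 4 - 5*c),
        mul_nonneg hc (sq_nonneg (2*b - 2 + 3*c)), sq_nonneg d, mul_nonneg hc (sq_nonneg d)]
    · nlinarith [mul_nonneg hc hd, mul_nonneg (mul_nonneg hc hd) hb, sq_nonneg d,
        mul_nonneg (by linarith : (0:ℝ) ≤ 5*c - 4) (by linarith : (0:ℝ) ≤ 5*c - 1),
        mul_nonneg hc (mul_nonneg hd (by linarith : (0:ℝ) ≤ c - d)), mul_nonneg hb hc]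
  · norm_num
end

section
/- For an integer k ≥ 2, let f(a) = (a/(2k))³·C(2k,3) + (a/(2k))²·C(2k,2)·(1−a) + a(1−a)²/2 for a ∈ [0,1]. Then f attains its maximum on [0,1] at a* = (2k² + k − k√(4k−1))/(2k²+1), and f(a*) = (2k − 6k³ + 4k⁴ − k√(4k−1) + 4k²√(4k−1)) / (6(2k²+1)²). -/
set_option maxHeartbeats 1000000

lemma two_mul_choose_two (n : ℕ) : 2 * (n+1).choose 2 = (n+1) * n := by
  induction n with
  | zero => rfl
  | succ n ih =>
    rw [show n+1+1 = (n+1)+1 from rfl, Nat.choose_succ_succ (n+1) 1,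
      Nat.mul_add, ih, Nat.choose_one_right]
    ring

lemma six_mul_choose_three (n : ℕ) : 6 * (n+2).choose 3 = (n+2) * (n+1) * n := by
  induction n with
  | zero => rfl
  | succ n ih =>
    rw [show n+1+2 = (n+2)+1 from rfl, Nat.choose_succ_succ (n+2) 2,
      Nat.mul_add, ih, show (6:ℕ) = 3*2 from rfl, Nat.mul_assoc,
      two_mul_choose_two]
    ring

lemma cast_choose_two (n : ℕ) : (((n+1).choose 2 : ℕ) : ℝ) = ((n:ℝ)+1) * n / 2 := by
  have h := two_mul_choose_two n
  have h' : ((2 * (n+1).choose 2 : ℕ) : ℝ) = (((n+1)*n : ℕ) : ℝ) := by rw [h]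
  push_cast at h'
  linarith

lemma cast_choose_three (n : ℕ) : (((n+2).choose 3 : ℕ) : ℝ) = ((n:ℝ)+2) * ((n:ℝ)+1) * n / 6 := by
  have h := six_mul_choose_three n
  have h' : ((6 * (n+2).choose 3 : ℕ) : ℝ) = (((n+2)*(n+1)*n : ℕ) : ℝ) := by rw [h]
  push_cast at h'
  linarith

theorem stmt_7 (k : ℕ) (hk : 2 ≤ k) :
    IsMaxOn (fun a : ℝ => (a/(2*k))^3 * (Nat.choose (2*k) 3 : ℝ)
        + (a/(2*k))^2 * (Nat.choose (2*k) 2 : ℝ) * (1 - a) + a*(1-a)^2/2)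
      (Set.Icc 0 1)
      ((2*(k:ℝ)^2 + k - k*Real.sqrt (4*(k:ℝ) - 1)) / (2*(k:ℝ)^2 + 1)) ∧
    (fun a : ℝ => (a/(2*k))^3 * (Nat.choose (2*k) 3 : ℝ)
        + (a/(2*k))^2 * (Nat.choose (2*k) 2 : ℝ) * (1 - a) + a*(1-a)^2/2)
      ((2*(k:ℝ)^2 + k - k*Real.sqrt (4*(k:ℝ) - 1)) / (2*(k:ℝ)^2 + 1))
      = (2*(k:ℝ) - 6*(k:ℝ)^3 + 4*(k:ℝ)^4 - (k:ℝ)*Real.sqrt (4*(k:ℝ) - 1)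
        + 4*(k:ℝ)^2*Real.sqrt (4*(k:ℝ) - 1)) / (6*(2*(k:ℝ)^2 + 1)^2) := by
  have hk1 : (2:ℝ) ≤ (k:ℝ) := by exact_mod_cast hk
  have h40 : (0:ℝ) ≤ 4*(k:ℝ) - 1 := by linarith
  have hs2 : (Real.sqrt (4*(k:ℝ)-1))^2 = 4*(k:ℝ)-1 := Real.sq_sqrt h40
  have hsnn : 0 ≤ Real.sqrt (4*(k:ℝ)-1) := Real.sqrt_nonneg _
  have h2s : 2 ≤ Real.sqrt (4*(k:ℝ)-1) := by nlinarith
  have hc2 : ((Nat.choose (2*k) 2 : ℕ) : ℝ) = (2*(k:ℝ))*(2*(k:ℝ)-1)/2 := by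
    obtain ⟨n, hn⟩ : ∃ n, 2*k = n+1 := ⟨2*k-1, by omega⟩
    have hcn : (n:ℝ) = 2*(k:ℝ) - 1 := by
      have : ((2*k : ℕ) : ℝ) = ((n+1 : ℕ) : ℝ) := by rw [hn]
      push_cast at this; linarith
    rw [hn, cast_choose_two, hcn]; ring
  have hc3 : ((Nat.choose (2*k) 3 : ℕ) : ℝ) = (2*(k:ℝ))*(2*(k:ℝ)-1)*(2*(k:ℝ)-2)/6 := by
    obtain ⟨n, hn⟩ : ∃ n, 2*k = n+2 := ⟨2*k-2, by omega⟩
    have hcn : (n:ℝ) = 2*(k:ℝ) - 2 := by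
      have : ((2*k : ℕ) : ℝ) = ((n+2 : ℕ) : ℝ) := by rw [hn]
      push_cast at this; linarith
    rw [hn, cast_choose_three, hcn]; ring
  set s := Real.sqrt (4*(k:ℝ)-1) with hsdef
  have hKs : (k:ℝ) = (s^2+1)/4 := by linarith
  have hs1 : (0:ℝ) < s^2 + 1 := by positivity
  have hden : (0:ℝ) < s^4 + 2*s^2 + 9 := by positivity
  rw [hc2, hc3, hKs]
  constructor
  · rw [isMaxOn_iff]
    intro x hx
    obtain ⟨hx0, hx1⟩ := hx
    set a : ℝ := (2*((s^2+1)/4)^2 + (s^2+1)/4 - (s^2+1)/4*s) / (2*((s^2+1)/4)^2 + 1) with ha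
    have hN : (2*((s^2+1)/4)^2 + 1 : ℝ) ≠ 0 := by positivity
    have hK0 : ((s^2+1)/4 : ℝ) ≠ 0 := by positivity
    have key : ((a/(2*((s^2+1)/4)))^3 * ((2*((s^2+1)/4))*(2*((s^2+1)/4)-1)*(2*((s^2+1)/4)-2)/6)
        + (a/(2*((s^2+1)/4)))^2 * ((2*((s^2+1)/4))*(2*((s^2+1)/4)-1)/2) * (1-a) + a*(1-a)^2/2
        - ((x/(2*((s^2+1)/4)))^3 * ((2*((s^2+1)/4))*(2*((s^2+1)/4)-1)*(2*((s^2+1)/4)-2)/6)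
        + (x/(2*((s^2+1)/4)))^2 * ((2*((s^2+1)/4))*(2*((s^2+1)/4)-1)/2) * (1-x) + x*(1-x)^2/2))
        * (6*(s^2+1)^2*(s^2+2*s+3)^2)
        = (x*(s^2+2*s+3) - (s^2+1))^2 * ((s^2+1)*(s+1)*(s+3) - x*(s^4+2*s^2+9)) := by
      rw [ha]
      field_simp
      ring
    have hQ2 : 0 ≤ (s^2+1)*(s+1)*(s+3) - x*(s^4+2*s^2+9) := by nlinarith
    have hD : (0:ℝ) < 6*(s^2+1)^2*(s^2+2*s+3)^2 := by positivity
    have h := mul_nonneg (sq_nonneg (x*(s^2+2*s+3) - (s^2+1))) hQ2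
    rw [← key] at h
    have h2 := div_nonneg h hD.le
    rw [mul_div_assoc, div_self hD.ne', mul_one] at h2
    linarith
  · beta_reduce
    have hN : (2*((s^2+1)/4)^2 + 1 : ℝ) ≠ 0 := by positivity
    have hK0 : ((s^2+1)/4 : ℝ) ≠ 0 := by positivity
    field_simp
    ring
end

section
/- For an integer k ≥ 2 and w ∈ [0, 1/2], let g(w) = (w/(2k))³·C(2k,3) + (w/(2k))²·C(2k,2)·(1−w) + 11w³/54 − 5w²/9 + 5w/18 + 1/27. Then g is increasing on [0, 1/2]. -/
set_option maxHeartbeats 1000000 in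
theorem stmt_9 (k : ℕ) (hk : 2 ≤ k) :
    MonotoneOn (fun w : ℝ => (w/(2*k))^3 * (Nat.choose (2*k) 3 : ℝ)
        + (w/(2*k))^2 * (Nat.choose (2*k) 2 : ℝ) * (1 - w)
        + 11*w^3/54 - 5*w^2/9 + 5*w/18 + 1/27)
      (Set.Icc 0 (1/2)) := by
  have h3 : (Nat.choose (2*k) 3 : ℝ) = (2*k)*(2*k-1)*(2*k-2)/6 := by
    rw [Nat.cast_choose_eq_ascPochhammer_div]
    simp [ascPochhammer_succ_eval, Nat.factorial]
    have h2 : (2:ℕ) ≤ 2*k := by omega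
    push_cast [Nat.cast_sub h2]
    ring
  have h2 : (Nat.choose (2*k) 2 : ℝ) = (2*k)*(2*k-1)/2 := by
    rw [Nat.cast_choose_two]; push_cast; ring
  intro x hx y hy hxy
  obtain ⟨hx0, hx1⟩ := hx
  obtain ⟨hy0, hy1⟩ := hy
  have hK : (2:ℝ) ≤ (k:ℝ) := by exact_mod_cast hk
  set K : ℝ := (k:ℝ) with hKdef
  have hKpos : (0:ℝ) < K := by linarith
  have hK0 : K ≠ 0 := ne_of_gt hKpos
  simp only [h3, h2]
  rw [← sub_nonneg]
  have hS2 : x^2 + x*y + y^2 ≤ 3/4 := by nlinarith [mul_nonneg hx0 hy0]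
  have hQ : 0 ≤ (y - x) * ((9-14*K^2)*(x^2+x*y+y^2) - (6*K^2+27*K)*(x+y) + 30*K^2) := by
    apply mul_nonneg (by linarith)
    nlinarith [sq_nonneg (K-2),
      mul_nonneg (show (0:ℝ) ≤ 14*K^2-9 by nlinarith) (sub_nonneg.2 hS2),
      mul_nonneg (show (0:ℝ) ≤ 6*K^2+27*K by positivity)
        (show (0:ℝ) ≤ 1 - (x+y) by linarith)]
  have hEq : ((y/(2*K))^3 * ((2*K)*(2*K-1)*(2*K-2)/6)
        + (y/(2*K))^2 * ((2*K)*(2*K-1)/2) * (1 - y)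
        + 11*y^3/54 - 5*y^2/9 + 5*y/18 + 1/27)
      - ((x/(2*K))^3 * ((2*K)*(2*K-1)*(2*K-2)/6)
        + (x/(2*K))^2 * ((2*K)*(2*K-1)/2) * (1 - x)
        + 11*x^3/54 - 5*x^2/9 + 5*x/18 + 1/27)
      = (y - x) * ((9-14*K^2)*(x^2+x*y+y^2) - (6*K^2+27*K)*(x+y) + 30*K^2) / (108*K^2) := by
    field_simp
    ring
  rw [hEq]
  positivity
end

section
/- Suppose a, b, c, d > 0 with a+b+c+d = 1 satisfy the stationarity conditions a = 2b − 2c, c²/2 = cd + a²/4, and c = (13b² − 6b)/(8b − 4) (with 8b−4 ≠ 0). Then b ∈ {2/5, 4/9, 2/3}, and in each case one of the constraints a > 0, d > 0 fails; hence no interior critical point of λ(a,b,c,d) = (a²/4+ab+b²/2)c + (a+b)cd + c²d/2 + a²b/4 exists. -/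
theorem stmt_13 :
    ¬ ∃ a b c d : ℝ, 0 < a ∧ 0 < b ∧ 0 < c ∧ 0 < d ∧ a + b + c + d = 1 ∧
      a = 2*b - 2*c ∧ c^2/2 = c*d + a^2/4 ∧ 8*b - 4 ≠ 0 ∧
      c = (13*b^2 - 6*b)/(8*b - 4) := by
  rintro ⟨a, b, c, d, ha, hb, hc, hd, hsum, hae, heq, h8, hce⟩
  have hc8 : c * (8*b - 4) = 13*b^2 - 6*b := by
    rw [hce]; exact div_mul_cancel₀ _ h8
  have he : 3*c^2 - 10*b*c + 2*c + 2*b^2 = 0 := by nlinarith [hsum, hae, heq]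
  have hres : b * ((5*b - 2) * ((9*b - 4) * (3*b - 2))) = 0 := by
    linear_combination (-16*(2*b-1)^2/3) * he +
      ((3*(c*(8*b-4)) + 3*(13*b^2-6*b) - (40*b-8)*(2*b-1))/3) * hc8
  rcases mul_eq_zero.1 hres with h | h
  · linarith
  rcases mul_eq_zero.1 h with h | h
  · -- b = 2/5
    have hb2 : b = 2/5 := by linarith
    have hcv : c = 2/5 := by
      rw [hb2] at hc8; linarith
    linarith [hae, hb2, hcv, ha]
  rcases mul_eq_zero.1 h with h | h
  · -- b = 4/9
    have hb2 : b = 4/9 := by linarith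
    have hcv : c = 2/9 := by
      rw [hb2] at hc8; linarith
    linarith [hae, hsum, hd]
  · -- b = 2/3
    have hb2 : b = 2/3 := by linarith
    have hcv : c = 4/3 := by
      rw [hb2] at hc8; linarith
    linarith [hae, ha]
end

section
/- For an integer k ≥ 2, define α_k = (2k − 6k³ + 4k⁴ − k√(4k−1) + 4k²√(4k−1))/(2k²+1)². For all reals w₁, a, b ≥ 0 with w₁ + a + b = 1, if b ≤ w₁ or a = 0 or w₁ ≥ 1/2, then (w₁/(2k))³·C(2k,3) + (w₁/(2k))²·C(2k,2)·(1−w₁) + w₁(a²/4 + ab + b²/2) + a²b/4 ≤ α_k/6. -/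
lemma key_ineq (K t r : ℝ) (hK : 2 ≤ K) (ht0 : 0 ≤ t) (ht1 : t ≤ 1)
    (hr0 : 0 ≤ r) (hr2 : r^2 = 4*K - 1) :
    (t/(2*K))^3 * ((2*K)*(2*K-1)*(2*K-2)/6)
      + (t/(2*K))^2 * (K*(2*K-1)) * (1-t) + t*(1-t)^2/2
    ≤ ((2*K - 6*K^3 + 4*K^4 - K*r + 4*K^2*r) / (2*K^2+1)^2) / 6 := by
  have hKpos : (0:ℝ) < K := by linarith
  have hKne : K ≠ 0 := ne_of_gt hKpos
  set D : ℝ := 2*K^2+1 with hD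
  have hDpos : 0 < D := by positivity
  have hB : 0 ≤ K*(2*K+1+2*r) - D*t := by nlinarith
  have hprod : 0 ≤ (D*t - K*(2*K+1-r))^2 * (K*(2*K+1+2*r) - D*t) :=
    mul_nonneg (sq_nonneg _) hB
  have hEq : (D*t - K*(2*K+1-r))^2 * (K*(2*K+1+2*r) - D*t)
      = (-1*t^3 + 3*K*t^2 - 6*K^2*t + 6*K^2*t^2 - 6*K^2*t^3 + 4*K^3 + 12*K^3*t^2
          - 24*K^4*t + 24*K^4*t^2 - 12*K^4*t^3 - 12*K^5 + 12*K^5*t^2 + 8*K^6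
          - 24*K^6*t + 24*K^6*t^2 - 8*K^6*t^3)
        + r*(-2*K^3 + 8*K^4) := by
    linear_combination (3*K^2*t - 3*K^3 + 2*K^3*r - 6*K^4 + 6*K^4*t) * hr2
  have hId : ((2*K - 6*K^3 + 4*K^4 - K*r + 4*K^2*r) / D^2) / 6
      - ((t/(2*K))^3 * ((2*K)*(2*K-1)*(2*K-2)/6)
        + (t/(2*K))^2 * (K*(2*K-1)) * (1-t) + t*(1-t)^2/2)
      = ((-1*t^3 + 3*K*t^2 - 6*K^2*t + 6*K^2*t^2 - 6*K^2*t^3 + 4*K^3 + 12*K^3*t^2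
          - 24*K^4*t + 24*K^4*t^2 - 12*K^4*t^3 - 12*K^5 + 12*K^5*t^2 + 8*K^6
          - 24*K^6*t + 24*K^6*t^2 - 8*K^6*t^3)
        + r*(-2*K^3 + 8*K^4)) / (12*K^2*D^2) := by
    field_simp
    ring
  have hfinal : 0 ≤ ((-1*t^3 + 3*K*t^2 - 6*K^2*t + 6*K^2*t^2 - 6*K^2*t^3 + 4*K^3 + 12*K^3*t^2
          - 24*K^4*t + 24*K^4*t^2 - 12*K^4*t^3 - 12*K^5 + 12*K^5*t^2 + 8*K^6
          - 24*K^6*t + 24*K^6*t^2 - 8*K^6*t^3)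
        + r*(-2*K^3 + 8*K^4)) / (12*K^2*D^2) := by
    apply div_nonneg _ (by positivity)
    rw [← hEq]; exact hprod
  linarith [hId, hfinal]

theorem stmt_17 (k : ℕ) (hk : 2 ≤ k) (w₁ a b : ℝ)
    (hw : 0 ≤ w₁) (ha : 0 ≤ a) (hb : 0 ≤ b) (hsum : w₁ + a + b = 1)
    (hcase : b ≤ w₁ ∨ a = 0 ∨ w₁ ≥ 1/2) :
    (w₁/(2*k))^3 * (Nat.choose (2*k) 3 : ℝ)
      + (w₁/(2*k))^2 * (Nat.choose (2*k) 2 : ℝ) * (1 - w₁)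
      + w₁*(a^2/4 + a*b + b^2/2) + a^2*b/4
    ≤ ((2*(k:ℝ) - 6*(k:ℝ)^3 + 4*(k:ℝ)^4 - (k:ℝ)*Real.sqrt (4*(k:ℝ) - 1)
        + 4*(k:ℝ)^2*Real.sqrt (4*(k:ℝ) - 1)) / (2*(k:ℝ)^2 + 1)^2) / 6 := by
  set K : ℝ := (k:ℝ) with hKdef
  have hK : 2 ≤ K := by rw [hKdef]; exact_mod_cast hk
  have hKpos : (0:ℝ) < K := by linarith
  -- binomial coefficient casts
  have hc2 : ((2*k).choose 2 : ℝ) = K*(2*K-1) := by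
    rw [Nat.cast_choose_two]
    have h1 : ((2*k : ℕ) : ℝ) = 2*K := by push_cast; ring
    rw [h1]; ring
  have hc3 : ((2*k).choose 3 : ℝ) = (2*K)*(2*K-1)*(2*K-2)/6 := by
    have hd : (2*k).descFactorial 3 = 6 * (2*k).choose 3 := by
      rw [Nat.descFactorial_eq_factorial_mul_choose]; norm_num [Nat.factorial]
    have hd2 : (2*k).descFactorial 3 = (2*k - 2) * ((2*k - 1) * (2*k)) := by
      simp [Nat.descFactorial]
    have h2k : 2 ≤ 2*k := by omega
    have h1k : 1 ≤ 2*k := by omega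
    have : (6 : ℝ) * ((2*k).choose 3 : ℝ) = (2*K-2) * ((2*K-1) * (2*K)) := by
      rw [← Nat.cast_ofNat (n := 6), ← Nat.cast_mul, ← hd, hd2]
      push_cast [Nat.cast_sub h2k, Nat.cast_sub h1k]
      ring
    linarith
  rw [hc2, hc3]
  -- reduce the a,b part
  have hab : w₁*(a^2/4 + a*b + b^2/2) + a^2*b/4 ≤ w₁*(1-w₁)^2/2 := by
    have hs : (1 - w₁) = a + b := by linarith
    rw [hs]
    rcases hcase with h | h | h
    · nlinarith [mul_nonneg (mul_nonneg ha ha) (sub_nonneg.mpr h)]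
    · subst h; nlinarith [sq_nonneg b]
    · have hbw : b ≤ w₁ := by linarith
      nlinarith [mul_nonneg (mul_nonneg ha ha) (sub_nonneg.mpr hbw)]
  have hr0 : 0 ≤ Real.sqrt (4*K - 1) := Real.sqrt_nonneg _
  have hr2 : (Real.sqrt (4*K - 1))^2 = 4*K - 1 := Real.sq_sqrt (by linarith)
  have hw1 : w₁ ≤ 1 := by linarith
  have := key_ineq K w₁ (Real.sqrt (4*K-1)) hK hw hw1 hr0 hr2
  linarith
end

section
/- For an integer k ≥ 2, the maximization over w₁ ∈ [0,1] of F(w₁) = (w₁/(2k))³·C(2k,3) + (w₁/(2k))²·C(2k,2)·(1−w₁) + w₁(1−w₁)²/2 satisfies F(w₁) ≤ (2k − 6k³ + 4k⁴ − k√(4k−1) + 4k²√(4k−1))/(6(2k²+1)²) for all w₁ ∈ [0,1]. -/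
theorem stmt_19 (k : ℕ) (hk : 2 ≤ k) (w₁ : ℝ) (h0 : 0 ≤ w₁) (h1 : w₁ ≤ 1) :
    (w₁/(2*k))^3 * (Nat.choose (2*k) 3 : ℝ)
      + (w₁/(2*k))^2 * (Nat.choose (2*k) 2 : ℝ) * (1 - w₁)
      + w₁*(1 - w₁)^2/2
    ≤ (2*(k:ℝ) - 6*(k:ℝ)^3 + 4*(k:ℝ)^4 - (k:ℝ)*Real.sqrt (4*(k:ℝ) - 1)
        + 4*(k:ℝ)^2*Real.sqrt (4*(k:ℝ) - 1)) / (6*(2*(k:ℝ)^2 + 1)^2) := by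
  set K : ℝ := (k : ℝ) with hKdef
  have hK : (2:ℝ) ≤ K := by rw [hKdef]; exact_mod_cast hk
  have hKpos : (0:ℝ) < K := by linarith
  set s : ℝ := Real.sqrt (4*K - 1) with hsdef
  have hs0 : 0 ≤ s := Real.sqrt_nonneg _
  have hs2 : s^2 = 4*K - 1 := Real.sq_sqrt (by linarith)
  -- choose 2
  have hc2 : ((2*k).choose 2 : ℝ) = K * (2*K - 1) := by
    rw [Nat.cast_choose_two]
    push_cast
    ring
  -- choose 3
  have hc3 : ((2*k).choose 3 : ℝ) = (2*K - 2)*((2*K - 1)*(2*K))/6 := by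
    have h6 : 6 * (2*k).choose 3 = (2*k).descFactorial 3 := by
      rw [Nat.descFactorial_eq_factorial_mul_choose]
      norm_num [Nat.factorial]
    have hd : (2*k).descFactorial 3 = (2*k - 2) * ((2*k - 1) * (2*k)) := by
      simp [Nat.descFactorial_succ, Nat.descFactorial]
    have h1k : (1:ℕ) ≤ 2*k := by omega
    have h2k : (2:ℕ) ≤ 2*k := by omega
    have : (6:ℝ) * ((2*k).choose 3 : ℝ) = (2*K - 2)*((2*K - 1)*(2*K)) := by
      rw [← Nat.cast_ofNat, ← Nat.cast_mul, h6, hd]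
      push_cast [Nat.cast_sub h1k, Nat.cast_sub h2k]
      ring
    linarith
  rw [hc2, hc3]
  -- rewrite LHS as a single fraction
  have hKne : K ≠ 0 := ne_of_gt hKpos
  have hF : (w₁/(2*K))^3 * ((2*K - 2)*((2*K - 1)*(2*K))/6)
      + (w₁/(2*K))^2 * (K*(2*K - 1)) * (1 - w₁)
      + w₁*(1 - w₁)^2/2
      = ((2*K^2+1)*w₁^3 - 3*K*(2*K+1)*w₁^2 + 6*K^2*w₁) / (12*K^2) := by
    field_simp
    ring
  rw [hF]
  rw [div_le_div_iff₀ (by positivity) (by positivity)]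
  have hP : 0 ≤ ((2*K^2+1)*w₁ - K*(2*K+1-s))^2 := sq_nonneg _
  have hR : 0 ≤ K*(2*K+1) + 2*K*s - (2*K^2+1)*w₁ := by
    nlinarith [mul_nonneg hKpos.le hs0]
  have hPR := mul_nonneg hP hR
  have h6 : (2*K - 6*K^3 + 4*K^4 - K*s + 4*K^2*s) * (12*K^2)
      - ((2*K^2+1)*w₁^3 - 3*K*(2*K+1)*w₁^2 + 6*K^2*w₁) * (6*(2*K^2+1)^2)
      = 6 * (((2*K^2+1)*w₁ - K*(2*K+1-s))^2
          * (K*(2*K+1) + 2*K*s - (2*K^2+1)*w₁)) := by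
    linear_combination (36*K^4 + 18*K^3 - 12*K^3*s - 36*K^4*w₁ - 18*K^2*w₁) * hs2
  linarith [h6, hPR]
end
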